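/- Law of total plausibility: if (W,F,F',Pl) is an algebraic cps, A_1,...,A_n is a partition of W with each A_i ∈ F, X ∈ F, and Y ∈ F', then Pl(X|Y) = ⊕_{i : A_i ∩ Y ∈ F'} Pl(X | A_i ∩ Y) ⊗ Pl(A_i | Y). -/

import Mathlib

open Classical

/-- Pl-determined domain of ⊗: pairs (Pl(U | V ∩ V'), Pl(V | V')). -/
def DomMul {W D : Type*} (F F' : Set (Set W)) (Pl : Set W → Set W → D) (a c : D) : Prop :=
  ∃ U V V', U ∈ F ∧ V ∈ F ∧ V' ∈ F' ∧ V ∩ V' ∈ F' ∧ Pl U (V ∩ V') = a ∧ Pl V V' = c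

/-- Pl-determined domain of ⊕: pairs (Pl(U₁|V), Pl(U₂|V)) with U₁, U₂ disjoint. -/
def DomAdd {W D : Type*} (F F' : Set (Set W)) (Pl : Set W → Set W → D) (a b : D) : Prop :=
  ∃ U₁ U₂ V, U₁ ∈ F ∧ U₂ ∈ F ∧ V ∈ F' ∧ Disjoint U₁ U₂ ∧ Pl U₁ V = a ∧ Pl U₂ V = b

/-- An algebraic conditional plausibility space. -/
structure AlgCPS (W : Type*) (D : Type*) [PartialOrder D] [BoundedOrder D] where
  F : Set (Set W)
  F' : Set (Set W)
  Pl : Set W → Set W → D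
  oplus : D → D → D
  otimes : D → D → D
  F_univ : Set.univ ∈ F
  F_compl : ∀ U ∈ F, Uᶜ ∈ F
  F_union : ∀ U ∈ F, ∀ V ∈ F, U ∪ V ∈ F
  F'_nonempty : F'.Nonempty
  F'_subset : F' ⊆ F
  F'_superset : ∀ V ∈ F', ∀ V' ∈ F, V ⊆ V' → V' ∈ F'
  cpl1 : ∀ V ∈ F', Pl ∅ V = ⊥
  cpl2 : ∀ V ∈ F', Pl Set.univ V = ⊤
  cpl3 : ∀ U U' V, U ∈ F → U' ∈ F → V ∈ F' → U ⊆ U' → Pl U V ≤ Pl U' V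
  cpl4 : ∀ U V, U ∈ F → V ∈ F' → Pl U V = Pl (U ∩ V) V
  acc4 : ∀ U V, U ∈ F → V ∈ F' → Pl U V ≠ ⊥ → U ∩ V ∈ F'
  alg1 : ∀ U U' V, U ∈ F → U' ∈ F → V ∈ F' → Disjoint U U' →
    Pl (U ∪ U') V = oplus (Pl U V) (Pl U' V)
  alg2 : ∀ U V V', U ∈ F → V ∈ F → V' ∈ F' → V ∩ V' ∈ F' →
    Pl (U ∩ V) V' = otimes (Pl U (V ∩ V')) (Pl V V')
  alg3 : ∀ a b₁ b₂ : D, DomMul F F' Pl a b₁ → DomMul F F' Pl a b₂ →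
    DomMul F F' Pl a (oplus b₁ b₂) → DomAdd F F' Pl b₁ b₂ →
    DomAdd F F' Pl (otimes a b₁) (otimes a b₂) →
    otimes a (oplus b₁ b₂) = oplus (otimes a b₁) (otimes a b₂)
  alg4 : ∀ a b c : D, DomMul F F' Pl a c → DomMul F F' Pl b c →
    otimes a c ≤ otimes b c → c ≠ ⊥ → a ≤ b

/-- d is in the range of Pl. -/
def AlgCPS.InRange {W D : Type*} [PartialOrder D] [BoundedOrder D]
    (S : AlgCPS W D) (d : D) : Prop :=
  ∃ U V, U ∈ S.F ∧ V ∈ S.F' ∧ S.Pl U V = d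

/-- law of total plausibility.  If A₁,…,Aₙ is a measurable partition
of W, X ∈ F and Y ∈ F', then Pl(X|Y) is the ⊕-sum, over those i with Aᵢ ∩ Y ∈ F',
of Pl(X | Aᵢ ∩ Y) ⊗ Pl(Aᵢ | Y). -/
theorem total_plausibility {W D : Type*} [PartialOrder D] [BoundedOrder D]
    (S : AlgCPS W D) (n : ℕ) (A : Fin n → Set W)
    (hmeas : ∀ i, A i ∈ S.F)
    (hdisj : ∀ i j, i ≠ j → Disjoint (A i) (A j))
    (hcover : (⋃ i, A i) = Set.univ)
    (X Y : Set W) (hX : X ∈ S.F) (hY : Y ∈ S.F') :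
    S.Pl X Y =
      ((List.finRange n).filter (fun i => A i ∩ Y ∈ S.F')).foldr
        (fun i acc => S.oplus (S.otimes (S.Pl X (A i ∩ Y)) (S.Pl (A i) Y)) acc) ⊥ := by
  classical
  have hF_empty : (∅ : Set W) ∈ S.F := by
    have := S.F_compl _ S.F_univ
    simpa using this
  have hcap : ∀ U ∈ S.F, ∀ V ∈ S.F, U ∩ V ∈ S.F := by
    intro U hU V hV
    have : (Uᶜ ∪ Vᶜ)ᶜ ∈ S.F :=
      S.F_compl _ (S.F_union _ (S.F_compl _ hU) _ (S.F_compl _ hV))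
    simpa [Set.compl_union] using this
  have hYF : Y ∈ S.F := S.F'_subset hY
  -- auxiliary: for any list of pairwise-disjoint indices
  have aux : ∀ l : List (Fin n), l.Pairwise (fun i j => Disjoint (A i) (A j)) →
      (l.foldr (fun i s => (X ∩ A i) ∪ s) ∅) ∈ S.F ∧
      S.Pl (l.foldr (fun i s => (X ∩ A i) ∪ s) ∅) Y =
        (l.filter (fun i => A i ∩ Y ∈ S.F')).foldr
          (fun i acc => S.oplus (S.otimes (S.Pl X (A i ∩ Y)) (S.Pl (A i) Y)) acc) ⊥ := by
    intro l hl
    induction l with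
    | nil =>
        refine ⟨hF_empty, ?_⟩
        simpa using S.cpl1 _ hY
    | cons i l ih =>
        have h1 : ∀ j ∈ l, Disjoint (A i) (A j) := (List.pairwise_cons.1 hl).1
        obtain ⟨hUF, hUPl⟩ := ih (List.pairwise_cons.1 hl).2
        set U : Set W := l.foldr (fun i s => (X ∩ A i) ∪ s) ∅ with hUdef
        have hXAi : X ∩ A i ∈ S.F := hcap _ hX _ (hmeas i)
        have hdisjAU : ∀ (m : List (Fin n)), (∀ j ∈ m, Disjoint (A i) (A j)) →
            Disjoint (A i) (m.foldr (fun j s => (X ∩ A j) ∪ s) ∅) := by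
          intro m
          induction m with
          | nil => simp
          | cons j m ihm =>
              intro h
              simp only [List.foldr_cons]
              refine Set.disjoint_union_right.2 ⟨?_, ihm fun k hk => h k (List.mem_cons_of_mem _ hk)⟩
              exact (h j List.mem_cons_self).mono_right Set.inter_subset_right
        have hdisjXU : Disjoint (X ∩ A i) U :=
          (hdisjAU l h1).mono_left Set.inter_subset_right
        have hcons : ((i :: l).foldr (fun i s => (X ∩ A i) ∪ s) ∅) = (X ∩ A i) ∪ U := rfl
        have hsplit : S.Pl ((X ∩ A i) ∪ U) Y = S.oplus (S.Pl (X ∩ A i) Y) (S.Pl U Y) :=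
          S.alg1 _ _ _ hXAi hUF hY hdisjXU
        refine ⟨by rw [hcons]; exact S.F_union _ hXAi _ hUF, ?_⟩
        by_cases hP : A i ∩ Y ∈ S.F'
        · have halg2 : S.Pl (X ∩ A i) Y = S.otimes (S.Pl X (A i ∩ Y)) (S.Pl (A i) Y) :=
            S.alg2 X (A i) Y hX (hmeas i) hY hP
          rw [hcons, hsplit, halg2, hUPl,
            List.filter_cons_of_pos (by simpa using hP), List.foldr_cons]
        · -- here Pl(X ∩ A i | Y) = ⊥
          have hbot : S.Pl (X ∩ A i) Y = ⊥ := by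
            by_contra hne
            have h1 : (X ∩ A i) ∩ Y ∈ S.F' := S.acc4 _ _ hXAi hY hne
            have h2 : A i ∩ Y ∈ S.F' := by
              refine S.F'_superset _ h1 _ (hcap _ (hmeas i) _ hYF) ?_
              intro x hx
              exact ⟨hx.1.2, hx.2⟩
            exact hP h2
          have hbot2 : S.oplus (⊥ : D) (S.Pl U Y) = S.Pl U Y := by
            have := S.alg1 ∅ U Y hF_empty hUF hY (by simp)
            rw [S.cpl1 _ hY] at this
            simpa using this.symm
          rw [hcons, hsplit, hbot, hbot2, hUPl,
            List.filter_cons_of_neg (by simpa using hP)]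
  have hpw : (List.finRange n).Pairwise (fun i j => Disjoint (A i) (A j)) :=
    (List.nodup_finRange n).imp (fun h => hdisj _ _ h)
  obtain ⟨-, hPl⟩ := aux (List.finRange n) hpw
  have hfold : (List.finRange n).foldr (fun i s => (X ∩ A i) ∪ s) ∅ = X := by
    have hmem : ∀ (m : List (Fin n)) (x : W),
        x ∈ m.foldr (fun i s => (X ∩ A i) ∪ s) ∅ ↔ ∃ i ∈ m, x ∈ X ∩ A i := by
      intro m x
      induction m with
      | nil => simp
      | cons j m ihm => simp [ihm]
    ext x
    rw [hmem]
    constructor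
    · rintro ⟨i, -, hx⟩; exact hx.1
    · intro hx
      have : x ∈ ⋃ i, A i := hcover ▸ Set.mem_univ x
      obtain ⟨i, hi⟩ := Set.mem_iUnion.1 this
      exact ⟨i, List.mem_finRange i, hx, hi⟩
  rw [hfold] at hPl
  exact hPl
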